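/- For every real number 0 < q < 1 there exists a constant C = C(q) > 0 such that for every real number c ∈ (0, 1], every positive integer n, and every real polynomial P of degree at most n with P(−1) = 0, P(x) ≥ 0 and P'(x) ≥ 0 for all x ∈ [−1, 1], one has ∫_{1 − c/n²}^{1} P(x)^q (1 − x)^{−q} dx ≤ C · c^{1−q} · ∫_{−1}^{1} P'(x)^q dx. -/

import Mathlib

open Polynomial MeasureTheory Real Set

noncomputable section
namespace Stmt11

lemma cont_cos_mul (c : ℝ) : Continuous fun θ : ℝ => Real.cos (c * θ) :=
  Real.continuous_cos.comp (continuous_const.mul continuous_id)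

lemma integral_cos_nat (k : ℕ) :
    ∫ θ in (0:ℝ)..π, Real.cos (k * θ) = if k = 0 then π else 0 := by
  rcases Nat.eq_zero_or_pos k with hk | hk
  · simp [hk]
  · have hk' : (k : ℝ) ≠ 0 := Nat.cast_ne_zero.mpr hk.ne'
    rw [if_neg hk.ne', intervalIntegral.integral_comp_mul_left _ hk']
    simp [integral_cos, Real.sin_nat_mul_pi]

lemma orth (k j : ℕ) :
    ∫ θ in (0:ℝ)..π, Real.cos (k * θ) * Real.cos (j * θ)
      = if k = j then (if k = 0 then π else π/2) else 0 := by
  wlog h : j ≤ k generalizing k j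
  · have hne : k ≠ j := by omega
    simp only [fun θ : ℝ => mul_comm (Real.cos (k*θ)) (Real.cos (j*θ)), if_neg hne]
    rw [this j k (by omega), if_neg (by omega : ¬ j = k)]
  · have key : ∀ θ : ℝ, Real.cos (k * θ) * Real.cos (j * θ)
        = (Real.cos ((k + j : ℕ) * θ) + Real.cos ((k - j : ℕ) * θ)) / 2 := by
      intro θ
      have h1 : ((k + j : ℕ) : ℝ) * θ = k * θ + j * θ := by push_cast; ring
      have h2 : ((k - j : ℕ) : ℝ) * θ = k * θ - j * θ := by
        rw [Nat.cast_sub h]; ring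
      rw [h1, h2, Real.cos_add, Real.cos_sub]; ring
    simp only [key]
    rw [intervalIntegral.integral_div,
      intervalIntegral.integral_add ((cont_cos_mul _).intervalIntegrable _ _)
        ((cont_cos_mul _).intervalIntegrable _ _),
      integral_cos_nat, integral_cos_nat]
    rcases eq_or_ne k j with rfl | hne
    · rcases eq_or_ne k 0 with rfl | h0
      · simp
      · simp [h0, Nat.sub_self, Nat.add_eq_zero, h0]
    · have h1 : k + j ≠ 0 := by omega
      have h2 : k - j ≠ 0 := by omega
      simp [hne, h1, h2]; omega

def V (m : ℕ) : Submodule ℝ (ℝ → ℝ) :=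
  Submodule.span ℝ {f : ℝ → ℝ | ∃ k : ℕ, k ≤ m ∧ f = fun θ => Real.cos (k * θ)}

lemma V_mono {m m' : ℕ} (h : m ≤ m') : V m ≤ V m' := by
  apply Submodule.span_mono
  rintro f ⟨k, hk, rfl⟩
  exact ⟨k, hk.trans h, rfl⟩

lemma gen_mem {m k : ℕ} (h : k ≤ m) : (fun θ => Real.cos (k * θ)) ∈ V m :=
  Submodule.subset_span ⟨k, h, rfl⟩

lemma cos_mul_mem {m : ℕ} {g : ℝ → ℝ} (hg : g ∈ V m) :
    (fun θ => Real.cos θ * g θ) ∈ V (m + 1) := by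
  induction hg using Submodule.span_induction with
  | mem f hf =>
    obtain ⟨k, hk, rfl⟩ := hf
    rcases Nat.eq_zero_or_pos k with rfl | hkpos
    · have : (fun θ : ℝ => Real.cos θ * Real.cos ((0:ℕ) * θ)) = fun θ => Real.cos ((1:ℕ) * θ) := by
        funext θ; simp
      rw [this]; exact gen_mem (by omega)
    · have key : (fun θ : ℝ => Real.cos θ * Real.cos (k * θ))
          = (1/2 : ℝ) • (fun θ => Real.cos ((k+1 : ℕ) * θ)) + (1/2 : ℝ) • (fun θ => Real.cos ((k-1 : ℕ) * θ)) := by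
        funext θ
        have h1 : ((k + 1 : ℕ) : ℝ) * θ = k * θ + θ := by push_cast; ring
        have h2 : ((k - 1 : ℕ) : ℝ) * θ = k * θ - θ := by rw [Nat.cast_sub hkpos]; ring
        simp only [Pi.add_apply, Pi.smul_apply, smul_eq_mul, h1, h2, Real.cos_add, Real.cos_sub]
        ring
      rw [key]
      exact Submodule.add_mem _ (Submodule.smul_mem _ _ (gen_mem (by omega)))
        (Submodule.smul_mem _ _ (gen_mem (by omega)))
  | zero =>
    have : (fun θ => Real.cos θ * (0 : ℝ → ℝ) θ) = (0 : ℝ → ℝ) := by funext θ; simp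
    rw [this]; exact Submodule.zero_mem _
  | add f g _ _ hf hg =>
    have : (fun θ => Real.cos θ * (f + g) θ) = (fun θ => Real.cos θ * f θ) + fun θ => Real.cos θ * g θ := by
      funext θ; simp [mul_add]
    rw [this]; exact Submodule.add_mem _ hf hg
  | smul c f _ hf =>
    have : (fun θ => Real.cos θ * (c • f) θ) = c • fun θ => Real.cos θ * f θ := by
      funext θ; simp [Pi.smul_apply, smul_eq_mul]; ring
    rw [this]; exact Submodule.smul_mem _ _ hf

lemma pow_cos_mem (j : ℕ) : (fun θ => (Real.cos θ) ^ j) ∈ V j := by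
  induction j with
  | zero =>
    have : (fun θ : ℝ => (Real.cos θ) ^ 0) = fun θ => Real.cos ((0:ℕ) * θ) := by
      funext θ; simp
    rw [this]; exact gen_mem le_rfl
  | succ j ih =>
    have : (fun θ : ℝ => (Real.cos θ) ^ (j+1)) = fun θ => Real.cos θ * (Real.cos θ)^j := by
      funext θ; ring
    rw [this]; exact cos_mul_mem ih

lemma poly_cos_mem {m : ℕ} (Q : ℝ[X]) (hQ : Q.natDegree ≤ m) :
    (fun θ => Q.eval (Real.cos θ)) ∈ V m := by
  have hlt : Q.natDegree < m + 1 := Nat.lt_succ_of_le hQ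
  have key : (fun θ => Q.eval (Real.cos θ))
      = ∑ j ∈ Finset.range (m+1), Q.coeff j • fun θ : ℝ => (Real.cos θ) ^ j := by
    funext θ
    rw [Polynomial.eval_eq_sum_range' hlt]
    simp [Finset.sum_apply, smul_eq_mul, mul_comm]
  rw [key]
  exact Submodule.sum_mem _ fun j hj =>
    Submodule.smul_mem _ _ (V_mono (Nat.lt_succ_iff.mp (Finset.mem_range.mp hj)) (pow_cos_mem j))

def K (m : ℕ) (θ0 : ℝ) : ℝ → ℝ :=
  fun θ => 1 + 2 * ∑ i ∈ Finset.range m, Real.cos ((i+1 : ℕ) * θ0) * Real.cos ((i+1 : ℕ) * θ)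

lemma K_cont (m : ℕ) (θ0 : ℝ) : Continuous (K m θ0) := by
  unfold K
  exact continuous_const.add (continuous_const.mul (continuous_finset_sum _ fun i _ =>
    continuous_const.mul (cont_cos_mul _)))

lemma K_bound (m : ℕ) (θ0 θ : ℝ) : K m θ0 θ ≤ 2 * m + 1 := by
  unfold K
  have h : ∑ i ∈ Finset.range m, Real.cos ((i+1 : ℕ) * θ0) * Real.cos ((i+1 : ℕ) * θ) ≤ m := by
    calc _ ≤ ∑ i ∈ Finset.range m, (1:ℝ) := Finset.sum_le_sum fun i _ => by
              calc Real.cos ((i+1:ℕ) * θ0) * Real.cos ((i+1:ℕ) * θ)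
                  ≤ |Real.cos ((i+1:ℕ) * θ0) * Real.cos ((i+1:ℕ) * θ)| := le_abs_self _
                _ = |Real.cos ((i+1:ℕ) * θ0)| * |Real.cos ((i+1:ℕ) * θ)| := abs_mul _ _
                _ ≤ 1 * 1 := by
                    apply mul_le_mul (Real.abs_cos_le_one _) (Real.abs_cos_le_one _)
                      (abs_nonneg _) zero_le_one
                _ = 1 := one_mul _
      _ = m := by simp
  nlinarith

lemma K_neg_bound (m : ℕ) (θ0 θ : ℝ) : -(2 * m + 1) ≤ K m θ0 θ := by
  unfold K
  have h : -(m:ℝ) ≤ ∑ i ∈ Finset.range m, Real.cos ((i+1 : ℕ) * θ0) * Real.cos ((i+1 : ℕ) * θ) := by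
    calc -(m:ℝ) = ∑ i ∈ Finset.range m, (-1:ℝ) := by simp
      _ ≤ _ := Finset.sum_le_sum fun i _ => by
          have := abs_mul (Real.cos ((i+1:ℕ) * θ0)) (Real.cos ((i+1:ℕ) * θ))
          have h1 := Real.abs_cos_le_one ((i+1:ℕ) * θ0)
          have h2 := Real.abs_cos_le_one ((i+1:ℕ) * θ)
          have := neg_abs_le (Real.cos ((i+1:ℕ) * θ0) * Real.cos ((i+1:ℕ) * θ))
          nlinarith [abs_nonneg (Real.cos ((i+1:ℕ) * θ0)), abs_nonneg (Real.cos ((i+1:ℕ) * θ))]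
  nlinarith

lemma kernel_gen (m : ℕ) (θ0 : ℝ) (k : ℕ) (hk : k ≤ m) :
    ∫ θ in (0:ℝ)..π, Real.cos (k * θ) * K m θ0 θ = π * Real.cos (k * θ0) := by
  have expand : ∀ θ : ℝ, Real.cos (k * θ) * K m θ0 θ
      = Real.cos (k * θ) + ∑ i ∈ Finset.range m,
          (2 * Real.cos ((i+1:ℕ) * θ0)) * (Real.cos (k * θ) * Real.cos ((i+1:ℕ) * θ)) := by
    intro θ
    unfold K
    rw [mul_add, mul_one, Finset.mul_sum]
    congr 1
    rw [Finset.mul_sum]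
    exact Finset.sum_congr rfl fun i _ => by ring
  simp only [expand]
  rw [intervalIntegral.integral_add (f := fun θ => Real.cos (k * θ))
      (g := fun θ => ∑ i ∈ Finset.range m, (2 * Real.cos ((i+1:ℕ) * θ0)) * (Real.cos (k * θ) * Real.cos ((i+1:ℕ) * θ)))
      ((cont_cos_mul _).intervalIntegrable _ _)
      (Continuous.intervalIntegrable (continuous_finset_sum _ fun i _ =>
        continuous_const.mul ((cont_cos_mul _).mul (cont_cos_mul _))) _ _),
    intervalIntegral.integral_finset_sum (f := fun i θ => (2 * Real.cos ((i+1:ℕ) * θ0)) * (Real.cos (k * θ) * Real.cos ((i+1:ℕ) * θ))) (fun i _ =>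
      (Continuous.intervalIntegrable (continuous_const.mul ((cont_cos_mul _).mul (cont_cos_mul _))) _ _))]
  simp_rw [intervalIntegral.integral_const_mul, orth]
  rcases Nat.eq_zero_or_pos k with rfl | hkpos
  · have : ∀ i ∈ Finset.range m, (2 * Real.cos ((i+1:ℕ) * θ0)) *
        (if (0:ℕ) = i+1 then (if (0:ℕ) = 0 then π else π/2) else 0) = 0 := by
      intro i _; simp
    rw [Finset.sum_congr rfl this]
    simp [integral_cos_nat]
  · rw [integral_cos_nat, if_neg hkpos.ne']
    have : ∀ i ∈ Finset.range m, (2 * Real.cos ((i+1:ℕ) * θ0)) *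
        (if k = i+1 then (if k = 0 then π else π/2) else 0)
        = if i = k - 1 then π * Real.cos (k * θ0) else 0 := by
      intro i _
      rcases eq_or_ne k (i+1) with hke | hke
      · rw [if_pos hke, if_neg hkpos.ne', if_pos (by omega)]
        have : ((i+1:ℕ):ℝ) = (k:ℝ) := by rw [← hke]
        rw [this]; ring
      · rw [if_neg hke, if_neg (by omega), mul_zero]
    rw [Finset.sum_congr rfl this, Finset.sum_ite_eq' (Finset.range m) (k-1)
      (fun _ => π * Real.cos (k * θ0)), if_pos (Finset.mem_range.mpr (by omega)), zero_add]

lemma kernel_repr (m : ℕ) (θ0 : ℝ) {g : ℝ → ℝ} (hg : g ∈ V m) :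
    Continuous g ∧ ∫ θ in (0:ℝ)..π, g θ * K m θ0 θ = π * g θ0 := by
  induction hg using Submodule.span_induction with
  | mem f hf =>
    obtain ⟨k, hk, rfl⟩ := hf
    exact ⟨cont_cos_mul _, kernel_gen m θ0 k hk⟩
  | zero => refine ⟨continuous_const, ?_⟩; simp
  | add f g _ _ hf hg =>
    refine ⟨hf.1.add hg.1, ?_⟩
    have : ∀ θ, (f + g) θ * K m θ0 θ = f θ * K m θ0 θ + g θ * K m θ0 θ := by
      intro θ; simp [add_mul]
    simp only [this]
    rw [intervalIntegral.integral_add (f := fun θ => f θ * K m θ0 θ) (g := fun θ => g θ * K m θ0 θ) ((hf.1.mul (K_cont m θ0)).intervalIntegrable _ _)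
      ((hg.1.mul (K_cont m θ0)).intervalIntegrable _ _), hf.2, hg.2]
    simp [mul_add]
  | smul c f _ hf =>
    refine ⟨hf.1.const_smul c, ?_⟩
    have : ∀ θ, (c • f) θ * K m θ0 θ = c * (f θ * K m θ0 θ) := by
      intro θ; simp [smul_eq_mul]; ring
    simp only [this]
    rw [intervalIntegral.integral_const_mul, hf.2]
    simp [smul_eq_mul]; ring

/-- pointwise bound for nonneg functions in V m -/
lemma sup_bound (m : ℕ) {g : ℝ → ℝ} (hg : g ∈ V m) (hnn : ∀ θ, 0 ≤ g θ) (θ0 : ℝ) :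
    g θ0 ≤ (2 * m + 1) / π * ∫ θ in (0:ℝ)..π, g θ := by
  obtain ⟨hc, hrep⟩ := kernel_repr m θ0 hg
  have hπ : (0:ℝ) < π := Real.pi_pos
  have h1 : ∫ θ in (0:ℝ)..π, g θ * K m θ0 θ ≤ ∫ θ in (0:ℝ)..π, (2*m+1) * g θ := by
    apply intervalIntegral.integral_mono_on hπ.le
      ((hc.mul (K_cont m θ0)).intervalIntegrable _ _)
      ((continuous_const.mul hc).intervalIntegrable _ _)
    intro θ _
    calc g θ * K m θ0 θ ≤ g θ * (2*m+1) := mul_le_mul_of_nonneg_left (K_bound m θ0 θ) (hnn θ)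
      _ = (2*m+1) * g θ := mul_comm _ _
  rw [hrep, intervalIntegral.integral_const_mul] at h1
  rw [div_mul_eq_mul_div, le_div_iff₀ hπ]
  linarith [h1]

lemma subst_cos (Q : ℝ[X]) :
    ∫ θ in (0:ℝ)..π, Real.sin θ * Q.eval (Real.cos θ) = ∫ x in (-1:ℝ)..1, Q.eval x := by
  have h := intervalIntegral.integral_comp_smul_deriv (a := 0) (b := π)
    (f := Real.cos) (f' := fun θ => -Real.sin θ) (g := fun x => Q.eval x)
    (fun θ _ => Real.hasDerivAt_cos θ)
    (Continuous.continuousOn (Real.continuous_sin.neg)) Q.continuous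
  simp only [Real.cos_zero, Real.cos_pi, smul_eq_mul, Function.comp, neg_mul] at h
  rw [intervalIntegral.integral_neg, intervalIntegral.integral_symm (-1 : ℝ) 1] at h
  linarith [h]

set_option maxHeartbeats 2000000 in
theorem nik (m : ℕ) (Q : ℝ[X]) (hdeg : Q.natDegree ≤ m)
    (hpos : ∀ x ∈ Set.Icc (-1:ℝ) 1, 0 ≤ Q.eval x) (x0 : ℝ) (hx0 : x0 ∈ Set.Icc (-1:ℝ) 1) :
    Q.eval x0 ≤ 7 * (m+1)^2 * ∫ x in (-1:ℝ)..1, Q.eval x := by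
  have hπ : (0:ℝ) < π := Real.pi_pos
  set g : ℝ → ℝ := fun θ => Q.eval (Real.cos θ) with hgdef
  have hgc : Continuous g := Q.continuous.comp Real.continuous_cos
  have hgnn : ∀ θ, 0 ≤ g θ := fun θ =>
    hpos _ ⟨Real.neg_one_le_cos θ, Real.cos_le_one θ⟩
  set J := ∫ θ in (0:ℝ)..π, g θ with hJdef
  have hJ0 : 0 ≤ J := intervalIntegral.integral_nonneg hπ.le fun θ _ => hgnn θ
  set I := ∫ x in (-1:ℝ)..1, Q.eval x with hIdef
  have hsubst : ∫ θ in (0:ℝ)..π, Real.sin θ * g θ = I := subst_cos Q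
  have hI0 : 0 ≤ I := by
    rw [← hsubst]
    exact intervalIntegral.integral_nonneg hπ.le fun θ hθ =>
      mul_nonneg (Real.sin_nonneg_of_nonneg_of_le_pi hθ.1 hθ.2) (hgnn θ)
  set τ : ℝ := (2 * m + 1) / π with hτdef
  have hτ0 : 0 ≤ τ := by positivity
  have hsup : ∀ θ0 : ℝ, g θ0 ≤ τ * J := fun θ0 => sup_bound m (poly_cos_mem Q hdeg) hgnn θ0
  set t : ℝ := π / (8 * (m + 1)) with htdef
  have hm1 : (0:ℝ) < m + 1 := by positivity
  have ht0 : 0 < t := by positivity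
  have hm0 : (0:ℝ) ≤ m := by exact_mod_cast Nat.zero_le m
  have ht8 : t ≤ π / 8 := by
    rw [htdef]
    apply div_le_div_of_nonneg_left hπ.le (by norm_num) (by linarith)
  have ht1 : t ≤ 1 := by nlinarith [Real.pi_lt_d2, ht8]
  have htπ : t ≤ π - t := by nlinarith [ht8, hπ]
  have hsint : t / 2 ≤ Real.sin t := by
    have := Real.sin_gt_sub_cube ht0
    nlinarith [ht0, ht1, sq_nonneg t]
  have hsintpos : 0 < Real.sin t := lt_of_lt_of_le (by linarith) hsint
  -- split J
  have hint : ∀ a b : ℝ, IntervalIntegrable g volume a b := fun a b => hgc.intervalIntegrable a b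
  have hsplit : J = (∫ θ in (0:ℝ)..t, g θ) + (∫ θ in t..(π - t), g θ) + ∫ θ in (π - t)..π, g θ := by
    rw [hJdef, ← intervalIntegral.integral_add_adjacent_intervals (hint 0 t) (hint t π),
      ← intervalIntegral.integral_add_adjacent_intervals (hint t (π - t)) (hint (π - t) π)]
    ring
  have hend1 : (∫ θ in (0:ℝ)..t, g θ) ≤ t * (τ * J) := by
    calc (∫ θ in (0:ℝ)..t, g θ) ≤ ∫ _ in (0:ℝ)..t, τ * J :=
          intervalIntegral.integral_mono_on ht0.le (hint 0 t)
            ((continuous_const : Continuous fun _ : ℝ => τ * J).intervalIntegrable 0 t)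
            (fun θ _ => hsup θ)
      _ = t * (τ * J) := by rw [intervalIntegral.integral_const, smul_eq_mul]; ring
  have hend2 : (∫ θ in (π - t)..π, g θ) ≤ t * (τ * J) := by
    calc (∫ θ in (π - t)..π, g θ) ≤ ∫ _ in (π - t)..π, τ * J :=
          intervalIntegral.integral_mono_on (by linarith : π - t ≤ π) (hint (π - t) π)
            ((continuous_const : Continuous fun _ : ℝ => τ * J).intervalIntegrable _ _)
            (fun θ _ => hsup θ)
      _ = t * (τ * J) := by rw [intervalIntegral.integral_const, smul_eq_mul]; ring
  have hsinlow : ∀ θ ∈ Set.Icc t (π - t), Real.sin t ≤ Real.sin θ := by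
    intro θ hθ
    rcases le_or_gt θ (π/2) with h | h
    · exact Real.sin_le_sin_of_le_of_le_pi_div_two (by linarith) h hθ.1
    · rw [← Real.sin_pi_sub θ]
      exact Real.sin_le_sin_of_le_of_le_pi_div_two (by linarith) (by linarith) (by linarith [hθ.2])
  have hmid : (∫ θ in t..(π - t), g θ) ≤ (1 / Real.sin t) * I := by
    have step1 : (∫ θ in t..(π - t), g θ) ≤ ∫ θ in t..(π - t), (1 / Real.sin t) * (Real.sin θ * g θ) := by
      apply intervalIntegral.integral_mono_on htπ (hint t (π - t))
        ((continuous_const.mul (Real.continuous_sin.mul hgc)).intervalIntegrable _ _)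
      intro θ hθ
      show g θ ≤ (1 / Real.sin t) * (Real.sin θ * g θ)
      rw [one_div, inv_mul_eq_div, le_div_iff₀ hsintpos]
      nlinarith [mul_nonneg (hgnn θ) (sub_nonneg.mpr (hsinlow θ hθ))]
    have step2 : (∫ θ in t..(π - t), Real.sin θ * g θ) ≤ I := by
      rw [← hsubst]
      have hintsg : ∀ a b : ℝ, IntervalIntegrable (fun θ => Real.sin θ * g θ) volume a b :=
        fun a b => (Real.continuous_sin.mul hgc).intervalIntegrable a b
      rw [← intervalIntegral.integral_add_adjacent_intervals (hintsg 0 t) (hintsg t π),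
        ← intervalIntegral.integral_add_adjacent_intervals (hintsg t (π - t)) (hintsg (π - t) π)]
      have e1 : 0 ≤ ∫ θ in (0:ℝ)..t, Real.sin θ * g θ :=
        intervalIntegral.integral_nonneg ht0.le fun θ hθ =>
          mul_nonneg (Real.sin_nonneg_of_nonneg_of_le_pi hθ.1 (by linarith [hθ.2])) (hgnn θ)
      have e2 : 0 ≤ ∫ θ in (π - t)..π, Real.sin θ * g θ :=
        intervalIntegral.integral_nonneg (by linarith) fun θ hθ =>
          mul_nonneg (Real.sin_nonneg_of_nonneg_of_le_pi (by linarith [hθ.1]) hθ.2) (hgnn θ)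
      linarith
    calc (∫ θ in t..(π - t), g θ) ≤ ∫ θ in t..(π - t), (1 / Real.sin t) * (Real.sin θ * g θ) := step1
      _ = (1 / Real.sin t) * ∫ θ in t..(π - t), Real.sin θ * g θ := intervalIntegral.integral_const_mul _ _
      _ ≤ (1 / Real.sin t) * I := by
          apply mul_le_mul_of_nonneg_left step2 (by positivity)
  -- combine
  have hts : 2 * (t * (τ * J)) ≤ J / 2 := by
    have : t * τ = (2*m+1) / (8 * (m+1)) := by
      rw [htdef, hτdef]; field_simp
    have h8 : (2*(m:ℝ)+1) / (8 * (m+1)) ≤ 1/4 := by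
      rw [div_le_div_iff₀ (by positivity) (by norm_num)]
      nlinarith [(by exact_mod_cast Nat.zero_le m : (0:ℝ) ≤ m)]
    calc 2 * (t * (τ * J)) = 2 * ((t * τ) * J) := by ring
      _ ≤ 2 * ((1/4) * J) := by
          apply mul_le_mul_of_nonneg_left _ (by norm_num)
          exact mul_le_mul_of_nonneg_right (this ▸ h8) hJ0
      _ = J / 2 := by ring
  have hJI : J ≤ 2 / Real.sin t * I := by
    have : J ≤ J / 2 + (1 / Real.sin t) * I := by
      rw [hsplit] at *
      linarith [hend1, hend2, hmid]
    have h2 : J / 2 ≤ (1 / Real.sin t) * I := by linarith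
    calc J = 2 * (J / 2) := by ring
      _ ≤ 2 * ((1 / Real.sin t) * I) := by linarith
      _ = 2 / Real.sin t * I := by ring
  have hJI2 : J ≤ 32 * (m+1) / π * I := by
    have hs : 2 / Real.sin t ≤ 4 / t := by
      rw [div_le_div_iff₀ hsintpos ht0]
      nlinarith [hsint, ht0]
    have ht4 : 4 / t = 32 * (m+1) / π := by
      rw [htdef, div_div_eq_mul_div]; ring
    calc J ≤ 2 / Real.sin t * I := hJI
      _ ≤ 4 / t * I := mul_le_mul_of_nonneg_right hs hI0
      _ = 32 * (m+1) / π * I := by rw [ht4]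
  -- final
  have harc : Q.eval x0 = g (Real.arccos x0) := by
    rw [hgdef]; simp [Real.cos_arccos hx0.1 hx0.2]
  rw [harc]
  calc g (Real.arccos x0) ≤ τ * J := hsup _
    _ ≤ τ * (32 * (m+1) / π * I) := mul_le_mul_of_nonneg_left hJI2 hτ0
    _ ≤ 7 * (m+1)^2 * I := by
        rw [hτdef]
        have hpi2 : (3.14:ℝ)^2 ≤ π^2 := by nlinarith [Real.pi_gt_d2]
        have key : (2*(m:ℝ)+1)/π * (32 * (m+1) / π) ≤ 7 * (m+1)^2 := by
          rw [div_mul_div_comm, div_le_iff₀ (by positivity)]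
          have h1 : (2*(m:ℝ)+1) * (32 * (m+1)) ≤ 64 * (m+1)^2 := by nlinarith [hm0]
          have h2 : (64:ℝ) * (m+1)^2 ≤ 7 * (m+1)^2 * (π*π) := by
            nlinarith [sq_nonneg ((m:ℝ)+1), hpi2]
          nlinarith [h1, h2]
        calc (2*(m:ℝ)+1)/π * (32 * (m+1) / π * I) = ((2*(m:ℝ)+1)/π * (32 * (m+1) / π)) * I := by ring
          _ ≤ 7 * (m+1)^2 * I := mul_le_mul_of_nonneg_right key hI0

lemma rpow_lower {y Kv q : ℝ} (hq0 : 0 < q) (hq1 : q < 1) (hy : 0 ≤ y) (hK : y ≤ Kv)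
    (hKpos : 0 < Kv) : Kv ^ (q-1) * y ≤ y ^ q := by
  rcases eq_or_lt_of_le hy with rfl | hy'
  · simp [Real.zero_rpow hq0.ne']
  · have h1 : Kv ^ (q-1) ≤ y ^ (q-1) := Real.rpow_le_rpow_of_nonpos hy' hK (by linarith)
    have h2 : y ^ (q-1) * y = y ^ q := by
      rw [← Real.rpow_add_one hy'.ne' (q-1)]; norm_num
    nlinarith [h1, hy', Real.rpow_pos_of_pos hy' (q-1)]

lemma int_rpow_tail {δ q : ℝ} (hq0 : 0 < q) (hq1 : q < 1) :
    ∫ x in (1-δ)..1, (1-x) ^ (-q) = δ ^ (1-q) / (1-q) := by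
  have h := intervalIntegral.integral_comp_sub_left (a := 1-δ) (b := 1)
    (fun u : ℝ => u ^ (-q)) 1
  simp only [sub_self, sub_sub_cancel] at h
  rw [h, integral_rpow (Or.inl (by linarith))]
  rw [Real.zero_rpow (by linarith : -q+1 ≠ 0)]
  have e : -q + 1 = 1 - q := by ring
  rw [e, sub_zero]

lemma intable_tail {δ q : ℝ} (hq1 : q < 1) :
    IntervalIntegrable (fun x : ℝ => (1-x) ^ (-q)) volume (1-δ) 1 := by
  have h := (intervalIntegral.intervalIntegrable_rpow' (a := 0) (b := δ)
    (by linarith : (-1:ℝ) < -q)).comp_sub_left 1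
  simpa using h.symm

end Stmt11

open Stmt11

/-- For `0 < q < 1`, the contribution near the right endpoint of `∫ P^q (1-x)^(-q)` is
controlled by `c^(1-q) ∫ P'^q` for nonnegative nondecreasing polynomials vanishing at `-1`. -/
theorem stmt11 (q : ℝ) (hq0 : 0 < q) (hq1 : q < 1) :
    ∃ C : ℝ, 0 < C ∧ ∀ c : ℝ, 0 < c → c ≤ 1 → ∀ n : ℕ, 0 < n →
      ∀ P : Polynomial ℝ, P.natDegree ≤ n → P.eval (-1) = 0 →
        (∀ x ∈ Set.Icc (-1 : ℝ) 1, 0 ≤ P.eval x) →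
        (∀ x ∈ Set.Icc (-1 : ℝ) 1, 0 ≤ P.derivative.eval x) →
        (∫ x in (1 - c / (n : ℝ) ^ 2)..1, (P.eval x) ^ q * (1 - x) ^ (-q)) ≤
          C * c ^ (1 - q) * ∫ x in (-1 : ℝ)..1, (P.derivative.eval x) ^ q := by
  refine ⟨7 / (1 - q), div_pos (by norm_num) (by linarith), ?_⟩
  intro c hc0 hc1 n hn P hdeg hPm1 hPnn hP'nn
  have hn1 : (1:ℝ) ≤ (n:ℝ) := by exact_mod_cast hn
  have hn2 : (1:ℝ) ≤ (n:ℝ)^2 := by nlinarith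
  set δ : ℝ := c / (n:ℝ)^2 with hδdef
  have hδ0 : 0 < δ := div_pos hc0 (by linarith)
  have hδ1 : δ ≤ 1 := by
    rw [hδdef, div_le_one (by linarith : (0:ℝ) < (n:ℝ)^2)]; linarith
  set A : ℝ := P.eval 1 with hAdef
  -- FTC facts
  have hftc : ∀ x : ℝ, ∫ y in x..1, P.derivative.eval y = A - P.eval x := fun x =>
    intervalIntegral.integral_eq_sub_of_hasDerivAt (fun y _ => P.hasDerivAt y)
      (P.derivative.continuous.intervalIntegrable _ _)
  have hIA : ∫ y in (-1:ℝ)..1, P.derivative.eval y = A := by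
    rw [hftc (-1), hPm1, sub_zero]
  have hmono : ∀ x ∈ Set.Icc (-1:ℝ) 1, P.eval x ≤ A := by
    intro x hx
    have h0 : 0 ≤ ∫ y in x..1, P.derivative.eval y :=
      intervalIntegral.integral_nonneg hx.2 fun y hy =>
        hP'nn y ⟨le_trans hx.1 hy.1, hy.2⟩
    rw [hftc x] at h0; linarith
  have hA0 : 0 ≤ A := hPnn 1 (by norm_num)
  rcases eq_or_lt_of_le hA0 with hA | hApos
  · -- A = 0 : P vanishes on [-1,1], so P = 0
    have hP0 : P = 0 := by
      apply Polynomial.eq_zero_of_infinite_isRoot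
      have hsub : Set.Icc (-1:ℝ) 1 ⊆ {x | P.IsRoot x} := by
        intro x hx
        have h1 := hPnn x hx
        have h2 := hmono x hx
        simp only [Set.mem_setOf_eq, Polynomial.IsRoot.def]
        linarith [hA]
      exact Set.Infinite.mono hsub (Set.Icc_infinite (show (-1:ℝ) < 1 by norm_num))
    subst hP0
    simp only [Polynomial.eval_zero, Polynomial.derivative_zero,
      Real.zero_rpow hq0.ne', zero_mul, intervalIntegral.integral_zero, mul_zero]
    exact le_refl 0
  · -- main case
    set Kv : ℝ := 7 * (n:ℝ)^2 * A with hKdef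
    have hKpos : 0 < Kv := by positivity
    have hK : ∀ x ∈ Set.Icc (-1:ℝ) 1, P.derivative.eval x ≤ Kv := by
      intro x hx
      have hd : P.derivative.natDegree ≤ n - 1 :=
        le_trans (Polynomial.natDegree_derivative_le P) (Nat.sub_le_sub_right hdeg 1)
      have h := nik (n-1) P.derivative hd hP'nn x hx
      rw [hIA] at h
      have hcast : ((n:ℕ) - 1 + 1 : ℕ) = n := Nat.succ_pred_eq_of_pos hn
      calc P.derivative.eval x ≤ 7 * ((n-1:ℕ)+1:ℝ)^2 * A := by exact_mod_cast h
        _ = Kv := by rw [hKdef]; norm_cast; rw [hcast]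
    -- lower bound for RHS integral
    set D : ℝ := ∫ x in (-1:ℝ)..1, (P.derivative.eval x) ^ q with hDdef
    have hcontq : Continuous fun x : ℝ => (P.derivative.eval x) ^ q :=
      (Real.continuous_rpow_const hq0.le).comp P.derivative.continuous
    have hDlow : Kv ^ (q-1) * A ≤ D := by
      have hmono2 : ∀ x ∈ Set.Icc (-1:ℝ) 1,
          Kv ^ (q-1) * P.derivative.eval x ≤ (P.derivative.eval x) ^ q := fun x hx =>
        rpow_lower hq0 hq1 (hP'nn x hx) (hK x hx) hKpos
      have h := intervalIntegral.integral_mono_on (by norm_num : (-1:ℝ) ≤ 1)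
        ((continuous_const.mul P.derivative.continuous).intervalIntegrable (μ := volume) _ _)
        (hcontq.intervalIntegrable (μ := volume) _ _) hmono2
      change ∫ u in (-1:ℝ)..1, Kv ^ (q-1) * P.derivative.eval u ≤ _ at h
      rwa [intervalIntegral.integral_const_mul, hIA] at h
    -- upper bound for LHS integral
    have h1δ : (0:ℝ) ≤ 1 - δ := by linarith
    have hsubI : Set.Icc (1-δ) 1 ⊆ Set.Icc (-1:ℝ) 1 :=
      Set.Icc_subset_Icc (by linarith) (le_refl 1)
    have hptwise : ∀ x ∈ Set.Icc (1-δ) 1,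
        (P.eval x) ^ q * (1-x) ^ (-q) ≤ A ^ q * (1-x) ^ (-q) := by
      intro x hx
      apply mul_le_mul_of_nonneg_right
      · exact Real.rpow_le_rpow (hPnn x (hsubI hx)) (hmono x (hsubI hx)) hq0.le
      · exact Real.rpow_nonneg (by linarith [hx.2]) _
    have hgI : IntervalIntegrable (fun x : ℝ => A ^ q * (1-x) ^ (-q)) volume (1-δ) 1 :=
      (intable_tail (δ := δ) hq1).const_mul _
    have hfI : IntervalIntegrable (fun x : ℝ => (P.eval x) ^ q * (1-x) ^ (-q)) volume (1-δ) 1 := by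
      apply IntervalIntegrable.mono_fun' hgI
      · have hAq : (0:ℝ) < A ^ q := Real.rpow_pos_of_pos hApos q
        have feq : (fun x : ℝ => (P.eval x) ^ q * (1-x) ^ (-q))
            = fun x : ℝ => (P.eval x) ^ q * ((A ^ q * (1-x) ^ (-q)) * (A ^ q)⁻¹) := by
          funext x; field_simp
        rw [Set.uIoc_of_le (by linarith : 1-δ ≤ 1), feq]
        exact (((Real.continuous_rpow_const hq0.le).comp P.continuous).aestronglyMeasurable).mul
          (hgI.aestronglyMeasurable.mul aestronglyMeasurable_const)
      · rw [Set.uIoc_of_le (by linarith : 1-δ ≤ 1)]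
        filter_upwards [ae_restrict_mem measurableSet_Ioc] with x hx
        have hx' : x ∈ Set.Icc (1-δ) 1 := ⟨hx.1.le, hx.2⟩
        have h1 := hptwise x hx'
        have e1 : |(P.eval x) ^ q| = (P.eval x) ^ q :=
          abs_of_nonneg (Real.rpow_nonneg (hPnn x (hsubI hx')) q)
        have e2 : |(1-x) ^ (-q)| = (1-x) ^ (-q) :=
          abs_of_nonneg (Real.rpow_nonneg (by linarith [hx'.2]) _)
        simpa [Real.norm_eq_abs, abs_mul, e1, e2] using h1
    have hLHS : (∫ x in (1-δ)..1, (P.eval x) ^ q * (1-x) ^ (-q))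
        ≤ A ^ q * (δ ^ (1-q) / (1-q)) := by
      have h := intervalIntegral.integral_mono_on (by linarith : 1-δ ≤ 1) hfI hgI hptwise
      rwa [intervalIntegral.integral_const_mul, int_rpow_tail hq0 hq1] at h
    -- final arithmetic
    set B : ℝ := (n:ℝ)^2 with hBdef
    have hB0 : 0 < B := by positivity
    have hA' : A ^ (q-1) * A = A ^ q := by
      rw [← Real.rpow_add_one hApos.ne' (q-1)]; norm_num
    have e2 : Kv ^ (q-1) * A = 7 ^ (q-1) * B ^ (q-1) * A ^ q := by
      rw [hKdef, Real.mul_rpow (by nlinarith [hB0] : (0:ℝ) ≤ 7 * B) hA0,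
        Real.mul_rpow (by norm_num) hB0.le, ← hA']
      ring
    have hDlow' : 7 ^ (q-1) * B ^ (q-1) * A ^ q ≤ D := by rw [← e2]; exact hDlow
    have h7 : (7:ℝ) ^ (q-1) * 7 = 7 ^ q := by
      rw [← Real.rpow_add_one (by norm_num : (7:ℝ) ≠ 0) (q-1)]; norm_num
    have h7q : (1:ℝ) ≤ 7 ^ q := by
      calc (1:ℝ) = 7 ^ (0:ℝ) := by rw [Real.rpow_zero]
        _ ≤ 7 ^ q := Real.rpow_le_rpow_of_exponent_le (by norm_num) hq0.le
    have hBA0 : 0 ≤ B ^ (q-1) * A ^ q :=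
      mul_nonneg (Real.rpow_nonneg hB0.le _) (Real.rpow_nonneg hA0 _)
    have hkey : B ^ (q-1) * A ^ q ≤ 7 * D := by
      calc B ^ (q-1) * A ^ q ≤ 7 ^ q * (B ^ (q-1) * A ^ q) := le_mul_of_one_le_left hBA0 h7q
        _ = 7 * (7 ^ (q-1) * B ^ (q-1) * A ^ q) := by rw [← h7]; ring
        _ ≤ 7 * D := by linarith [hDlow']
    have hδpow : δ ^ (1-q) = c ^ (1-q) * B ^ (q-1) := by
      rw [hδdef, Real.div_rpow hc0.le hB0.le, div_eq_mul_inv,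
        show q - 1 = -(1-q) by ring, Real.rpow_neg hB0.le]
    have hcq0 : 0 ≤ c ^ (1-q) := Real.rpow_nonneg hc0.le _
    calc (∫ x in (1-δ)..1, (P.eval x) ^ q * (1-x) ^ (-q))
        ≤ A ^ q * (δ ^ (1-q) / (1-q)) := hLHS
      _ = (B ^ (q-1) * A ^ q) * c ^ (1-q) / (1-q) := by rw [hδpow]; ring
      _ ≤ (7 * D) * c ^ (1-q) / (1-q) := by
          rw [div_eq_mul_inv, div_eq_mul_inv]
          exact mul_le_mul_of_nonneg_right (mul_le_mul_of_nonneg_right hkey hcq0)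
            (inv_nonneg.mpr (by linarith))
      _ = 7 / (1-q) * c ^ (1-q) * D := by ring


end
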